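/- Let p, q be unit quaternions and let Z = (U, V) be a tangent vector to S³×S³ at (p,q), i.e. ⟨U,p⟩ = 0 and ⟨V,q⟩ = 0. Then JZ = (1/√3)(2pq⁻¹V − U, −2qp⁻¹U + V) is again a tangent vector to S³×S³ at (p,q), and J(JZ) = −Z. -/

import Mathlib

noncomputable section

open Quaternion

/-- Euclidean inner product on the quaternions: `⟨x,y⟩ = Re (x * star y)`. -/
def ipQ (x y : ℍ[ℝ]) : ℝ := (x * star y).re

/-- Euclidean inner product on pairs of quaternions. -/
def ip2Q (Z W : ℍ[ℝ] × ℍ[ℝ]) : ℝ := ipQ Z.1 W.1 + ipQ Z.2 W.2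

/-- The almost complex structure `J` of the nearly Kähler `S³ × S³` at `(p,q)`:
`J(U,V) = (1/√3)(2pq⁻¹V − U, −2qp⁻¹U + V)`. -/
def Jmap (p q : ℍ[ℝ]) (Z : ℍ[ℝ] × ℍ[ℝ]) : ℍ[ℝ] × ℍ[ℝ] :=
  ((Real.sqrt 3)⁻¹ • ((2 : ℝ) • (p * q⁻¹ * Z.2) - Z.1),
   (Real.sqrt 3)⁻¹ • (-((2 : ℝ) • (q * p⁻¹ * Z.1)) + Z.2))

/-- The nearly Kähler metric `g(Z,Z') = ½(⟨Z,Z'⟩ + ⟨JZ,JZ'⟩)`. -/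
def gmet (p q : ℍ[ℝ]) (Z W : ℍ[ℝ] × ℍ[ℝ]) : ℝ :=
  (1 / 2) * (ip2Q Z W + ip2Q (Jmap p q Z) (Jmap p q W))

/-- The almost product structure `P(U,V) = (pq⁻¹V, qp⁻¹U)`. -/
def Pmap (p q : ℍ[ℝ]) (Z : ℍ[ℝ] × ℍ[ℝ]) : ℍ[ℝ] × ℍ[ℝ] :=
  (p * q⁻¹ * Z.2, q * p⁻¹ * Z.1)

/-- The usual product structure `Q(U,V) = (−U, V)`. -/
def Qmap (Z : ℍ[ℝ] × ℍ[ℝ]) : ℍ[ℝ] × ℍ[ℝ] := (-Z.1, Z.2)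

/-- Cross product of (imaginary) quaternions: `α × β = ½(αβ − βα)`. -/
def crossQ (a b : ℍ[ℝ]) : ℍ[ℝ] := (1 / 2 : ℝ) • (a * b - b * a)

/-- The tensor `G = ∇̃J` at `(p,q)`, evaluated on tangent vectors `X = (pα, qβ)`,
`Y = (pγ, qδ)` (so `α = p⁻¹X₁`, etc.):
`G(X,Y) = (2/(3√3))(p(β×γ + α×δ + α×γ − 2β×δ), q(−α×δ − β×γ + 2α×γ − β×δ))`. -/
def Gmap (p q : ℍ[ℝ]) (X Y : ℍ[ℝ] × ℍ[ℝ]) : ℍ[ℝ] × ℍ[ℝ] :=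
  (2 / (3 * Real.sqrt 3) : ℝ) •
    ((p * (crossQ (q⁻¹ * X.2) (p⁻¹ * Y.1) + crossQ (p⁻¹ * X.1) (q⁻¹ * Y.2)
        + crossQ (p⁻¹ * X.1) (p⁻¹ * Y.1) - (2 : ℝ) • crossQ (q⁻¹ * X.2) (q⁻¹ * Y.2)),
      q * (-(crossQ (p⁻¹ * X.1) (q⁻¹ * Y.2)) - crossQ (q⁻¹ * X.2) (p⁻¹ * Y.1)
        + (2 : ℝ) • crossQ (p⁻¹ * X.1) (p⁻¹ * Y.1) - crossQ (q⁻¹ * X.2) (q⁻¹ * Y.2))))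


private lemma re_mul_comm' (a b : ℍ[ℝ]) : (a * b).re = (b * a).re := by
  rw [Quaternion.re_mul, Quaternion.re_mul]; ring

private lemma inv_eq_star' {p : ℍ[ℝ]} (hp : ‖p‖ = 1) : p⁻¹ = star p := by
  have h : normSq p = 1 := by rw [Quaternion.normSq_eq_norm_mul_self, hp]; ring
  rw [Quaternion.inv_def, h]; simp

private lemma tang' (p q V : ℍ[ℝ]) (hp : ‖p‖ = 1) (hq : ‖q‖ = 1)
    (hV : ipQ V q = 0) : ipQ (p * q⁻¹ * V) p = 0 := by
  have hps : star p * p = 1 := by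
    rw [Quaternion.star_mul_self, Quaternion.normSq_eq_norm_mul_self, hp]; norm_num
  unfold ipQ at *
  rw [re_mul_comm', ← mul_assoc, ← mul_assoc, hps, one_mul, inv_eq_star' hq,
    re_mul_comm', hV]

/-- `JZ` is again tangent to `S³ × S³` at `(p,q)` and `J(JZ) = −Z`. -/
theorem stmt0 (p q : ℍ[ℝ]) (hp : ‖p‖ = 1) (hq : ‖q‖ = 1)
    (Z : ℍ[ℝ] × ℍ[ℝ]) (hZ1 : ipQ Z.1 p = 0) (hZ2 : ipQ Z.2 q = 0) :
    ipQ (Jmap p q Z).1 p = 0 ∧ ipQ (Jmap p q Z).2 q = 0 ∧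
      Jmap p q (Jmap p q Z) = -Z := by
  have hp0 : p ≠ 0 := by intro h; simp [h] at hp
  have hq0 : q ≠ 0 := by intro h; simp [h] at hq
  have t1 : ipQ (p * q⁻¹ * Z.2) p = 0 := tang' p q Z.2 hp hq hZ2
  have t2 : ipQ (q * p⁻¹ * Z.1) q = 0 := tang' q p Z.1 hq hp hZ1
  have key1 : p * q⁻¹ * (q * p⁻¹ * Z.1) = Z.1 := by
    rw [mul_assoc p q⁻¹, mul_assoc q p⁻¹, ← mul_assoc q⁻¹ q, inv_mul_cancel₀ hq0,
      one_mul, ← mul_assoc, mul_inv_cancel₀ hp0, one_mul]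
  have key2 : q * p⁻¹ * (p * q⁻¹ * Z.2) = Z.2 := by
    rw [mul_assoc q p⁻¹, mul_assoc p q⁻¹, ← mul_assoc p⁻¹ p, inv_mul_cancel₀ hp0,
      one_mul, ← mul_assoc, mul_inv_cancel₀ hq0, one_mul]
  have h3 : (Real.sqrt 3)^2 = 3 := Real.sq_sqrt (by norm_num)
  unfold ipQ at t1 t2 hZ1 hZ2
  refine ⟨?_, ?_, ?_⟩
  · simp [Jmap, ipQ, smul_mul_assoc, sub_mul, smul_mul_assoc, t1, hZ1]
  · simp [Jmap, ipQ, smul_mul_assoc, add_mul, neg_mul, t2, hZ2]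
  · have e1 : (Jmap p q (Jmap p q Z)).1 = -Z.1 := by
      simp only [Jmap, mul_add, mul_neg, mul_smul_comm, key1, smul_add, smul_neg,
        smul_smul, smul_sub]
      match_scalars <;> field_simp <;> nlinarith [h3]
    have e2 : (Jmap p q (Jmap p q Z)).2 = -Z.2 := by
      simp only [Jmap, mul_sub, mul_neg, mul_smul_comm, key2, smul_add, smul_neg,
        smul_smul, smul_sub]
      match_scalars <;> field_simp <;> nlinarith [h3]
    exact Prod.ext e1 e2
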